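/- Under the L¹ assumptions for two data sets (f₁,ψ,g) and (f₂,ψ,g), if u₁, u₂ are the entropy solutions satisfying the Lewy–Stampacchia inequalities, ξᵢ = Δ_A uᵢ − fᵢ, and both solutions satisfy Δ_A uᵢ − (Δ_A ψ − fᵢ)χ_{{uᵢ=ψ}} = fᵢ a.e., and Δ_A ψ − fᵢ ≤ −λ < 0 a.e. on a measurable set ω ⊂ Ω, then the Lebesgue measure of the symmetric difference of the coincidence sets satisfies |({u₁=ψ} Δ {u₂=ψ}) ∩ ω| ≤ (1/λ)·∫_Ω |f₁ − f₂| dx, given the L¹-contraction ∫_Ω|ξ₁−ξ₂| ≤ ∫_Ω|f₁−f₂|. -/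

import Mathlib

open Real Set MeasureTheory

/-- The `A`-gradient `∇_A w = (a(|∇w|)/|∇w|)∇w`. -/
noncomputable def gradA {N : ℕ} (a : ℝ → ℝ)
    (w : EuclideanSpace ℝ (Fin N) → ℝ) (x : EuclideanSpace ℝ (Fin N)) :
    EuclideanSpace ℝ (Fin N) :=
  (a ‖gradient w x‖ / ‖gradient w x‖) • gradient w x

/-- The divergence of a vector field on `ℝᴺ`. -/
noncomputable def diverg {N : ℕ}
    (V : EuclideanSpace ℝ (Fin N) → EuclideanSpace ℝ (Fin N))
    (x : EuclideanSpace ℝ (Fin N)) : ℝ :=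
  ∑ i : Fin N, fderiv ℝ V x (EuclideanSpace.single i 1) i

/-- The `A`-Laplacian `Δ_A w = div(∇_A w)`. -/
noncomputable def lapA {N : ℕ} (a : ℝ → ℝ)
    (w : EuclideanSpace ℝ (Fin N) → ℝ) (x : EuclideanSpace ℝ (Fin N)) : ℝ :=
  diverg (gradA a w) x

/-- Corollary 1.2 (stability of coincidence sets): let `u₁, u₂` be the entropy solutions for
the data `(f₁,ψ,g)`, `(f₂,ψ,g)` with `ξᵢ = Δ_A uᵢ - fᵢ`, satisfying the a.e. equations
`Δ_A uᵢ - (Δ_Aψ - fᵢ)·χ_{uᵢ=ψ} = fᵢ`, the nondegeneracy `Δ_Aψ - fᵢ ≤ -λ < 0` a.e. on a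
measurable set `ω ⊆ Ω`, and the L¹-contraction `∫_Ω|ξ₁-ξ₂| ≤ ∫_Ω|f₁-f₂|`. Then
`|({u₁=ψ} Δ {u₂=ψ}) ∩ ω| ≤ (1/λ)·∫_Ω |f₁-f₂|`. -/
theorem stmt_15 {N : ℕ} (hN : 2 ≤ N)
    (Ω ω : Set (EuclideanSpace ℝ (Fin N))) (hΩo : IsOpen Ω)
    (hΩb : Bornology.IsBounded Ω) (hωm : MeasurableSet ω) (hωΩ : ω ⊆ Ω)
    (a : ℝ → ℝ)
    (ψ g f₁ f₂ u₁ u₂ : EuclideanSpace ℝ (Fin N) → ℝ)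
    (lam : ℝ) (hlam : 0 < lam)
    -- the coincidence sets `Iᵢ = {uᵢ = ψ}` are measurable
    (hI₁ : MeasurableSet {x | u₁ x = ψ x}) (hI₂ : MeasurableSet {x | u₂ x = ψ x})
    -- integrability of `ξ₁ - ξ₂` and of `f₁ - f₂` on `Ω`
    (hξint : IntegrableOn (fun x => (lapA a u₁ x - f₁ x) - (lapA a u₂ x - f₂ x)) Ω)
    (hfint : IntegrableOn (fun x => f₁ x - f₂ x) Ω)
    -- the a.e. equations (1.13) for both solutions
    (heq₁ : ∀ᵐ x ∂(volume.restrict Ω),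
      lapA a u₁ x - (lapA a ψ x - f₁ x) * ({y | u₁ y = ψ y}.indicator (fun _ => (1:ℝ)) x)
        = f₁ x)
    (heq₂ : ∀ᵐ x ∂(volume.restrict Ω),
      lapA a u₂ x - (lapA a ψ x - f₂ x) * ({y | u₂ y = ψ y}.indicator (fun _ => (1:ℝ)) x)
        = f₂ x)
    -- the nondegeneracy condition (1.17) on `ω`
    (hnd₁ : ∀ᵐ x ∂(volume.restrict ω), lapA a ψ x - f₁ x ≤ -lam)
    (hnd₂ : ∀ᵐ x ∂(volume.restrict ω), lapA a ψ x - f₂ x ≤ -lam)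
    -- the L¹-contraction (1.16)
    (hcontract :
      (∫ x in Ω, |(lapA a u₁ x - f₁ x) - (lapA a u₂ x - f₂ x)|)
        ≤ ∫ x in Ω, |f₁ x - f₂ x|) :
    (volume ((({x | u₁ x = ψ x} \ {x | u₂ x = ψ x}) ∪
              ({x | u₂ x = ψ x} \ {x | u₁ x = ψ x})) ∩ ω)).toReal
      ≤ (1 / lam) * ∫ x in Ω, |f₁ x - f₂ x| := by

  set S : Set (EuclideanSpace ℝ (Fin N)) :=
    (({x | u₁ x = ψ x} \ {x | u₂ x = ψ x}) ∪
      ({x | u₂ x = ψ x} \ {x | u₁ x = ψ x})) ∩ ω with hS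
  have hSm : MeasurableSet S := ((hI₁.diff hI₂).union (hI₂.diff hI₁)).inter hωm
  have hSω : S ⊆ ω := Set.inter_subset_right
  have hSΩ : S ⊆ Ω := hSω.trans hωΩ
  have hSfin : volume S < ⊤ :=
    lt_of_le_of_lt (measure_mono hSΩ) hΩb.measure_lt_top
  -- a.e. bound on S : lam ≤ |ξ₁ - ξ₂|
  have h1 : ∀ᵐ x ∂(volume.restrict S),
      lapA a u₁ x - (lapA a ψ x - f₁ x) * ({y | u₁ y = ψ y}.indicator (fun _ => (1:ℝ)) x)
        = f₁ x := ae_restrict_of_ae_restrict_of_subset hSΩ heq₁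
  have h2 : ∀ᵐ x ∂(volume.restrict S),
      lapA a u₂ x - (lapA a ψ x - f₂ x) * ({y | u₂ y = ψ y}.indicator (fun _ => (1:ℝ)) x)
        = f₂ x := ae_restrict_of_ae_restrict_of_subset hSΩ heq₂
  have h3 : ∀ᵐ x ∂(volume.restrict S), lapA a ψ x - f₁ x ≤ -lam :=
    ae_restrict_of_ae_restrict_of_subset hSω hnd₁
  have h4 : ∀ᵐ x ∂(volume.restrict S), lapA a ψ x - f₂ x ≤ -lam :=
    ae_restrict_of_ae_restrict_of_subset hSω hnd₂
  have hmem : ∀ᵐ x ∂(volume.restrict S), x ∈ S := ae_restrict_mem hSm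
  have hbound : ∀ᵐ x ∂(volume.restrict S),
      lam ≤ |(lapA a u₁ x - f₁ x) - (lapA a u₂ x - f₂ x)| := by
    filter_upwards [h1, h2, h3, h4, hmem] with x e1 e2 n1 n2 hx
    rcases hx.1 with ⟨hx1, hx2⟩ | ⟨hx2, hx1⟩
    · rw [Set.indicator_of_mem hx1] at e1
      rw [Set.indicator_of_notMem hx2] at e2
      have : (lapA a u₁ x - f₁ x) - (lapA a u₂ x - f₂ x) ≤ -lam := by
        nlinarith [e1, e2, n1]
      calc lam ≤ -((lapA a u₁ x - f₁ x) - (lapA a u₂ x - f₂ x)) := by linarith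
        _ ≤ |(lapA a u₁ x - f₁ x) - (lapA a u₂ x - f₂ x)| := neg_le_abs _
    · rw [Set.indicator_of_notMem hx1] at e1
      rw [Set.indicator_of_mem hx2] at e2
      have : lam ≤ (lapA a u₁ x - f₁ x) - (lapA a u₂ x - f₂ x) := by
        nlinarith [e1, e2, n2]
      exact this.trans (le_abs_self _)
  have hint : IntegrableOn
      (fun x => |(lapA a u₁ x - f₁ x) - (lapA a u₂ x - f₂ x)|) S :=
    (hξint.mono_set hSΩ).abs
  have hconst : IntegrableOn (fun _ => lam) S :=
    (integrableOn_const_iff).mpr (Or.inr hSfin)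
  have key : lam * (volume S).toReal
      ≤ ∫ x in Ω, |f₁ x - f₂ x| := by
    have e0 : lam * (volume S).toReal = ∫ _ in S, lam := by
      rw [setIntegral_const]; ring_nf; rfl
    calc lam * (volume S).toReal = ∫ _ in S, lam := e0
      _ ≤ ∫ x in S, |(lapA a u₁ x - f₁ x) - (lapA a u₂ x - f₂ x)| :=
          integral_mono_ae hconst hint hbound
      _ ≤ ∫ x in Ω, |(lapA a u₁ x - f₁ x) - (lapA a u₂ x - f₂ x)| :=
          setIntegral_mono_set hξint.abs
            (Filter.Eventually.of_forall fun x => abs_nonneg _)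
            (HasSubset.Subset.eventuallyLE hSΩ)
      _ ≤ ∫ x in Ω, |f₁ x - f₂ x| := hcontract
  have : (volume S).toReal ≤ (∫ x in Ω, |f₁ x - f₂ x|) / lam :=
    (le_div_iff₀' hlam).mpr key
  calc (volume S).toReal ≤ (∫ x in Ω, |f₁ x - f₂ x|) / lam := this
    _ = (1 / lam) * ∫ x in Ω, |f₁ x - f₂ x| := by ring
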